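/- Let N ≥ 1 be a natural number and let r be a real number with 1 < r < 2. Then there exists a constant C > 0 (depending only on r and N) such that for all vectors x, y ∈ ℝ^N that are not both zero, ‖y‖^r − ‖x‖^r − r‖x‖^(r−2)⟨x, y − x⟩ ≥ C‖x − y‖² / (‖x‖ + ‖y‖)^(2−r), where ⟨·,·⟩ denotes the Euclidean inner product and ‖·‖ the Euclidean norm. -/

import Mathlib

open Real Set

-- Step A: strong convexity of u ↦ u^r on [0, M]
lemma lindqvist_stepA (r : ℝ) (hr1 : 1 < r) (hr2 : r < 2) (M : ℝ) (hM : 1 ≤ M) (c₁ : ℝ)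
    (hc₁0 : 0 ≤ c₁) (hc₁ : 2 * c₁ ≤ r * (r - 1) * M ^ (r - 2)) :
    ∀ u ∈ Icc (0:ℝ) M, c₁ * (u - 1) ^ 2 ≤ u ^ r - 1 - r * (u - 1) := by
  set φ : ℝ → ℝ := fun u => r * u ^ (r - 1) - r - 2 * c₁ * (u - 1) with hφ
  have hd : ∀ u : ℝ, u ≠ 0 → HasDerivAt φ (r * ((r - 1) * u ^ (r - 2)) - 2 * c₁) u := by
    intro u hu
    have h1 := (Real.hasDerivAt_rpow_const (x := u) (p := r - 1) (Or.inl hu)).const_mul r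
    have h2 : HasDerivAt (fun u : ℝ => 2 * c₁ * (u - 1)) (2 * c₁) u := by
      simpa using ((hasDerivAt_id u).sub_const 1).const_mul (2 * c₁)
    have := (h1.sub_const r).sub h2
    rw [show r - 1 - 1 = r - 2 by ring] at this
    exact this
  have hφc : ContinuousOn φ (Icc 0 M) := by
    have h1 : ContinuousOn (fun u : ℝ => u ^ (r - 1)) (Icc 0 M) := fun u _ =>
      (Real.continuousAt_rpow_const u (r - 1) (Or.inr (by linarith))).continuousWithinAt
    exact ((continuousOn_const.mul h1).sub continuousOn_const).sub
      (continuousOn_const.mul (continuousOn_id.sub continuousOn_const))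
  have hφmono : MonotoneOn φ (Icc 0 M) := by
    apply monotoneOn_of_deriv_nonneg (convex_Icc 0 M) hφc
    · rw [interior_Icc]
      exact fun u hu => ((hd u (ne_of_gt hu.1)).differentiableAt).differentiableWithinAt
    · rw [interior_Icc]
      intro u hu
      rw [(hd u (ne_of_gt hu.1)).deriv]
      have hMu : M ^ (r - 2) ≤ u ^ (r - 2) :=
        Real.rpow_le_rpow_of_nonpos hu.1 hu.2.le (by linarith)
      have h2 : r * (r - 1) * M ^ (r - 2) ≤ r * (r - 1) * u ^ (r - 2) :=
        mul_le_mul_of_nonneg_left hMu (by nlinarith)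
      linarith
  have hφ1 : φ 1 = 0 := by simp [hφ]
  set ψ : ℝ → ℝ := fun u => u ^ r - 1 - r * (u - 1) - c₁ * (u - 1) ^ 2 with hψ
  have hψd : ∀ u : ℝ, HasDerivAt ψ (φ u) u := by
    intro u
    have h1 : HasDerivAt (fun u : ℝ => u ^ r) (r * u ^ (r - 1)) u :=
      Real.hasDerivAt_rpow_const (Or.inr hr1.le)
    have h2 : HasDerivAt (fun u : ℝ => r * (u - 1)) r u := by
      simpa using ((hasDerivAt_id u).sub_const 1).const_mul r
    have h3 : HasDerivAt (fun u : ℝ => c₁ * (u - 1) ^ 2) (c₁ * (2 * (u - 1))) u := by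
      have := (((hasDerivAt_id u).sub_const 1).pow 2).const_mul c₁
      simpa using this
    have := ((h1.sub_const 1).sub h2).sub h3
    refine this.congr_deriv ?_
    simp only [hφ]; ring
  have hψ1 : ψ 1 = 0 := by simp [hψ]
  have hanti : AntitoneOn ψ (Icc 0 1) := by
    apply antitoneOn_of_deriv_nonpos (convex_Icc 0 1)
      (fun u _ => (hψd u).continuousAt.continuousWithinAt)
      (fun u _ => (hψd u).differentiableAt.differentiableWithinAt)
    rw [interior_Icc]
    intro u hu
    rw [(hψd u).deriv, ← hφ1]
    exact hφmono ⟨hu.1.le, le_trans hu.2.le hM⟩ ⟨zero_le_one, hM⟩ hu.2.le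
  have hmono : MonotoneOn ψ (Icc 1 M) := by
    apply monotoneOn_of_deriv_nonneg (convex_Icc 1 M)
      (fun u _ => (hψd u).continuousAt.continuousWithinAt)
      (fun u _ => (hψd u).differentiableAt.differentiableWithinAt)
    rw [interior_Icc]
    intro u hu
    rw [(hψd u).deriv, ← hφ1]
    exact hφmono ⟨zero_le_one, hM⟩ ⟨by linarith [hu.1], hu.2.le⟩ hu.1.le
  intro u hu
  have h0 : 0 ≤ ψ u := by
    rcases le_total u 1 with h | h
    · have := hanti ⟨hu.1, h⟩ ⟨zero_le_one, le_refl 1⟩ h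
      rw [hψ1] at this; exact this
    · have := hmono ⟨le_refl 1, hM⟩ ⟨h, hu.2⟩ h
      rw [hψ1] at this; exact this
  simp only [hψ] at h0
  linarith

-- Step C: tail region u ≥ M where M ^ (r-1) = 4
lemma lindqvist_stepC (r : ℝ) (hr1 : 1 < r) (hr2 : r < 2) (M : ℝ) (hM : 1 ≤ M)
    (hM4 : M ^ (r - 1) = 4) (c : ℝ) (hc0 : 0 ≤ c) (hc : c ≤ r / 4)
    (hbase : c * M ^ (r - 2) * (M - 1) ^ 2 ≤ M ^ r - 1 - r * (M - 1)) :
    ∀ u : ℝ, M ≤ u → c * u ^ (r - 2) * (u - 1) ^ 2 ≤ u ^ r - 1 - r * (u - 1) := by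
  set G : ℝ → ℝ := fun u => u ^ r - 1 - r * (u - 1) - c * u ^ (r - 2) * (u - 1) ^ 2 with hG
  have hd : ∀ u : ℝ, 0 < u → HasDerivAt G
      (r * u ^ (r - 1) - r - c * ((r - 2) * u ^ (r - 3) * (u - 1) ^ 2
        + u ^ (r - 2) * (2 * (u - 1)))) u := by
    intro u hu
    have h1 : HasDerivAt (fun u : ℝ => u ^ r) (r * u ^ (r - 1)) u :=
      Real.hasDerivAt_rpow_const (Or.inr hr1.le)
    have h2 : HasDerivAt (fun u : ℝ => r * (u - 1)) r u := by
      simpa using ((hasDerivAt_id u).sub_const 1).const_mul r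
    have hA : HasDerivAt (fun u : ℝ => u ^ (r - 2)) ((r - 2) * u ^ (r - 3)) u := by
      have := Real.hasDerivAt_rpow_const (x := u) (p := r - 2) (Or.inl hu.ne')
      convert this using 2
      ring
    have hB : HasDerivAt (fun u : ℝ => (u - 1) ^ 2) (2 * (u - 1)) u := by
      have := ((hasDerivAt_id u).sub_const 1).pow 2
      simp at this
      exact this
    have h3 := ((hA.const_mul c).mul hB)
    have := ((h1.sub_const 1).sub h2).sub h3
    refine this.congr_deriv ?_
    ring
  have hmono : MonotoneOn G (Ici M) := by
    apply monotoneOn_of_deriv_nonneg (convex_Ici M)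
    · intro u hu
      exact (hd u (lt_of_lt_of_le (by linarith) hu)).continuousAt.continuousWithinAt
    · rw [interior_Ici]
      intro u hu
      exact (hd u (by rw [mem_Ioi] at hu; linarith)).differentiableAt.differentiableWithinAt
    · rw [interior_Ici]
      intro u hu
      rw [mem_Ioi] at hu
      have hu1 : 1 ≤ u := by linarith
      have hu0 : 0 < u := by linarith
      rw [(hd u hu0).deriv]
      have e2 : (4:ℝ) ≤ u ^ (r - 1) := by
        rw [← hM4]
        exact Real.rpow_le_rpow (by linarith) hu.le (by linarith)
      have e1 : u ^ (r - 2) * (u - 1) ≤ u ^ (r - 1) := by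
        have : u ^ (r - 2) * u = u ^ (r - 1) := by
          rw [← Real.rpow_add_one hu0.ne' (r - 2), show r - 2 + 1 = r - 1 by ring]
        nlinarith [Real.rpow_pos_of_pos hu0 (r - 2)]
      have n1 : c * ((r - 2) * u ^ (r - 3) * (u - 1) ^ 2) ≤ 0 := by
        apply mul_nonpos_of_nonneg_of_nonpos hc0
        apply mul_nonpos_of_nonpos_of_nonneg _ (sq_nonneg _)
        exact mul_nonpos_of_nonpos_of_nonneg (by linarith)
          (Real.rpow_pos_of_pos hu0 (r - 3)).le
      have n2 : c * (u ^ (r - 2) * (2 * (u - 1))) ≤ 2 * c * u ^ (r - 1) := by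
        nlinarith
      have n3 : 2 * c * u ^ (r - 1) ≤ (r / 2) * u ^ (r - 1) := by
        apply mul_le_mul_of_nonneg_right (by linarith)
        positivity
      have n4 : (r / 2) * 4 ≤ (r / 2) * u ^ (r - 1) :=
        mul_le_mul_of_nonneg_left e2 (by linarith)
      have n5 : (r / 2) * u ^ (r - 1) ≤ r * u ^ (r - 1) := by
        apply mul_le_mul_of_nonneg_right (by linarith)
        positivity
      nlinarith
  intro u hu
  have := hmono (self_mem_Ici) hu hu
  have hGM : 0 ≤ G M := by simp only [hG]; linarith
  have : 0 ≤ G u := le_trans hGM this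
  simp only [hG] at this
  linarith

lemma lindqvist_scalar (r : ℝ) (hr1 : 1 < r) (hr2 : r < 2) :
    ∃ C : ℝ, 0 < C ∧ C ≤ r / 4 ∧ ∀ u : ℝ, 0 ≤ u →
      C * (u - 1) ^ 2 ≤ (u ^ r - 1 - r * (u - 1)) * (1 + u) ^ (2 - r) := by
  set M : ℝ := (4 : ℝ) ^ ((r - 1)⁻¹) with hMdef
  have hr1' : (0:ℝ) < r - 1 := by linarith
  have hM1 : 1 ≤ M := Real.one_le_rpow (by norm_num) (by positivity)
  have hM0 : 0 < M := by linarith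
  have hM4 : M ^ (r - 1) = 4 := by
    rw [hMdef, ← Real.rpow_mul (by norm_num), inv_mul_cancel₀ hr1'.ne', Real.rpow_one]
  set c₁ : ℝ := r * (r - 1) * M ^ (r - 2) / 2 with hc₁def
  have hc₁0 : 0 < c₁ := by
    have := Real.rpow_pos_of_pos hM0 (r - 2)
    rw [hc₁def]; positivity
  set C : ℝ := min c₁ (r / 4) with hCdef
  have hC0 : 0 < C := lt_min hc₁0 (by linarith)
  have hCr : C ≤ r / 4 := min_le_right _ _
  have hCc₁ : C ≤ c₁ := min_le_left _ _
  have hA := lindqvist_stepA r hr1 hr2 M hM1 c₁ hc₁0.le (by rw [hc₁def]; ring_nf; rfl)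
  have hbase : C * M ^ (r - 2) * (M - 1) ^ 2 ≤ M ^ r - 1 - r * (M - 1) := by
    have h1 := hA M ⟨by linarith, le_refl M⟩
    have h2 : M ^ (r - 2) ≤ 1 := Real.rpow_le_one_of_one_le_of_nonpos hM1 (by linarith)
    have h3 : 0 < M ^ (r - 2) := Real.rpow_pos_of_pos hM0 _
    have h4 : C * M ^ (r - 2) ≤ c₁ := by nlinarith
    have h5 := mul_le_mul_of_nonneg_right h4 (sq_nonneg (M - 1))
    linarith
  have hCtail := lindqvist_stepC r hr1 hr2 M hM1 hM4 C hC0.le hCr hbase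
  refine ⟨C, hC0, hCr, fun u hu => ?_⟩
  rcases le_total u M with h | h
  · have hAu := hA u ⟨hu, h⟩
    have hpow : 1 ≤ (1 + u) ^ (2 - r) := Real.one_le_rpow (by linarith) (by linarith)
    have hh0 : 0 ≤ u ^ r - 1 - r * (u - 1) := le_trans (by positivity) hAu
    calc C * (u - 1) ^ 2 ≤ c₁ * (u - 1) ^ 2 :=
          mul_le_mul_of_nonneg_right hCc₁ (sq_nonneg _)
      _ ≤ u ^ r - 1 - r * (u - 1) := hAu
      _ ≤ (u ^ r - 1 - r * (u - 1)) * (1 + u) ^ (2 - r) := le_mul_of_one_le_right hh0 hpow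
  · have hu0 : 0 < u := lt_of_lt_of_le (by linarith) h
    have hCu := hCtail u h
    have hpow : u ^ (2 - r) ≤ (1 + u) ^ (2 - r) :=
      Real.rpow_le_rpow hu0.le (by linarith) (by linarith)
    have hone : u ^ (r - 2) * u ^ (2 - r) = 1 := by
      rw [← Real.rpow_add hu0, show r - 2 + (2 - r) = 0 by ring, Real.rpow_zero]
    have hh0 : 0 ≤ u ^ r - 1 - r * (u - 1) := by
      refine le_trans ?_ hCu
      have := Real.rpow_pos_of_pos hu0 (r - 2)
      positivity
    calc C * (u - 1) ^ 2 = (C * u ^ (r - 2) * (u - 1) ^ 2) * u ^ (2 - r) := by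
          rw [show (C * u ^ (r - 2) * (u - 1) ^ 2) * u ^ (2 - r)
            = C * (u - 1) ^ 2 * (u ^ (r - 2) * u ^ (2 - r)) by ring, hone, mul_one]
      _ ≤ (u ^ r - 1 - r * (u - 1)) * (1 + u) ^ (2 - r) := by
          apply mul_le_mul hCu hpow (Real.rpow_pos_of_pos hu0 _).le hh0

lemma lindqvist_scalar2 (r : ℝ) (hr1 : 1 < r) (hr2 : r < 2) :
    ∃ C : ℝ, 0 < C ∧ C ≤ r / 4 ∧ ∀ s t : ℝ, 0 < s → 0 ≤ t →
      C * (t - s) ^ 2 / (s + t) ^ (2 - r) ≤ t ^ r - s ^ r - r * s ^ (r - 1) * (t - s) := by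
  obtain ⟨C, hC0, hCr, hP⟩ := lindqvist_scalar r hr1 hr2
  refine ⟨C, hC0, hCr, fun s t hs ht => ?_⟩
  set u : ℝ := t / s with hu_def
  have hu : 0 ≤ u := div_nonneg ht hs.le
  have htu : t = s * u := by rw [hu_def]; field_simp
  have key := hP u hu
  have hPpos : 0 < (s + t) ^ (2 - r) := Real.rpow_pos_of_pos (by linarith) _
  have hs2 : s ^ r * s ^ (2 - r) = s ^ 2 := by
    rw [← Real.rpow_add hs, show r + (2 - r) = ((2:ℕ):ℝ) by norm_num, Real.rpow_natCast]
  have hsr1 : s ^ (r - 1) * s = s ^ r := by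
    rw [← Real.rpow_add_one hs.ne', show r - 1 + 1 = r by ring]
  have htr : t ^ r = s ^ r * u ^ r := by rw [htu, Real.mul_rpow hs.le hu]
  have hst : (s + t) ^ (2 - r) = s ^ (2 - r) * (1 + u) ^ (2 - r) := by
    rw [htu, show s + s * u = s * (1 + u) by ring, Real.mul_rpow hs.le (by linarith)]
  rw [div_le_iff₀ hPpos]
  have hmul := mul_le_mul_of_nonneg_left key
    (le_of_lt (show 0 < s ^ r * s ^ (2 - r) by
      have := Real.rpow_pos_of_pos hs r
      have := Real.rpow_pos_of_pos hs (2 - r)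
      positivity))
  calc C * (t - s) ^ 2 = s ^ r * s ^ (2 - r) * (C * (u - 1) ^ 2) := by
        rw [hs2, htu]; ring
    _ ≤ s ^ r * s ^ (2 - r) * ((u ^ r - 1 - r * (u - 1)) * (1 + u) ^ (2 - r)) := hmul
    _ = (t ^ r - s ^ r - r * s ^ (r - 1) * (t - s)) * (s + t) ^ (2 - r) := by
        rw [htr, hst, htu, ← hsr1]; ring



/-- Lindqvist strong-convexity inequality for `x ↦ ‖x‖^r`, case `1 < r < 2`:
there is `C > 0` (depending only on `r` and `N`) such that for all `x y : ℝ^N`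
not both zero,
`‖y‖^r − ‖x‖^r − r‖x‖^(r−2)⟨x, y − x⟩ ≥ C‖x − y‖² / (‖x‖ + ‖y‖)^(2−r)`.
(When `x = 0`, `‖x‖^(r−2)` is `(0 : ℝ) ^ (r - 2 : ℝ) = 0` by the junk value of
`Real.rpow`, matching the convention that `‖x‖^(r−2)⟨x, y − x⟩` is `0`.) -/
theorem lindqvist_inequality_lt_two (N : ℕ) (hN : 1 ≤ N) (r : ℝ)
    (hr1 : 1 < r) (hr2 : r < 2) :
    ∃ C : ℝ, 0 < C ∧ ∀ x y : EuclideanSpace ℝ (Fin N), ¬(x = 0 ∧ y = 0) →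
      ‖y‖ ^ r - ‖x‖ ^ r - r * ‖x‖ ^ (r - 2) * (inner ℝ x (y - x) : ℝ) ≥
        C * ‖x - y‖ ^ 2 / (‖x‖ + ‖y‖) ^ (2 - r) := by
  obtain ⟨C, hC0, hCr, hP⟩ := lindqvist_scalar2 r hr1 hr2
  refine ⟨C, hC0, fun x y hxy => ?_⟩
  by_cases hx : x = 0
  · have hy : y ≠ 0 := fun hy => hxy ⟨hx, hy⟩
    have ht : (0:ℝ) < ‖y‖ := norm_pos_iff.mpr hy
    subst hx
    rw [ge_iff_le]
    simp only [norm_zero, inner_zero_left, mul_zero, sub_zero, zero_sub, norm_neg, zero_add]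
    rw [Real.zero_rpow (by linarith : r ≠ 0)]
    have h2 : ‖y‖ ^ 2 = ‖y‖ ^ ((2:ℕ):ℝ) := (Real.rpow_natCast _ 2).symm
    rw [h2]
    rw [div_le_iff₀ (Real.rpow_pos_of_pos ht _)]
    have : ‖y‖ ^ ((2:ℕ):ℝ) = ‖y‖ ^ r * ‖y‖ ^ (2 - r) := by
      rw [← Real.rpow_add ht, show r + (2 - r) = ((2:ℕ):ℝ) by norm_num]
    rw [this]
    have hyr : 0 ≤ ‖y‖ ^ r * ‖y‖ ^ (2 - r) := by positivity
    nlinarith [Real.rpow_pos_of_pos ht r, Real.rpow_pos_of_pos ht (2 - r)]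
  · set s : ℝ := ‖x‖ with hs_def
    set t : ℝ := ‖y‖ with ht_def
    have hs : 0 < s := norm_pos_iff.mpr hx
    have ht : 0 ≤ t := norm_nonneg y
    set θ : ℝ := inner ℝ x y with hθ_def
    have hθ : θ ≤ s * t := real_inner_le_norm x y
    have hinner : (inner ℝ x (y - x) : ℝ) = θ - s ^ 2 := by
      rw [inner_sub_right, hθ_def, real_inner_self_eq_norm_sq, hs_def]
    have hnorm : ‖x - y‖ ^ 2 = s ^ 2 - 2 * θ + t ^ 2 := by
      rw [norm_sub_sq_real, hθ_def, hs_def, ht_def]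
    have hkey := hP s t hs ht
    have hPpos : 0 < (s + t) ^ (2 - r) := Real.rpow_pos_of_pos (by linarith) _
    have hspos : 0 < s ^ (r - 2) := Real.rpow_pos_of_pos hs _
    -- r * s^(r-2) ≥ 2*C/(s+t)^(2-r)
    have hslope : 2 * C / (s + t) ^ (2 - r) ≤ r * s ^ (r - 2) := by
      rw [div_le_iff₀ hPpos]
      have h1 : s ^ (2 - r) ≤ (s + t) ^ (2 - r) :=
        Real.rpow_le_rpow hs.le (by linarith) (by linarith)
      have h2 : s ^ (r - 2) * s ^ (2 - r) = 1 := by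
        rw [← Real.rpow_add hs, show r - 2 + (2 - r) = 0 by ring, Real.rpow_zero]
      have h3 : 1 ≤ s ^ (r - 2) * (s + t) ^ (2 - r) := by
        calc (1:ℝ) = s ^ (r - 2) * s ^ (2 - r) := h2.symm
          _ ≤ s ^ (r - 2) * (s + t) ^ (2 - r) :=
            mul_le_mul_of_nonneg_left h1 hspos.le
      nlinarith
    have hsr1 : s ^ (r - 1) = s ^ (r - 2) * s := by
      rw [← Real.rpow_add_one hs.ne', show r - 2 + 1 = r - 1 by ring]
    have hslack : 2 * C * (s * t - θ) / (s + t) ^ (2 - r) ≤ r * s ^ (r - 2) * (s * t - θ) := by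
      rw [div_le_iff₀ hPpos] at hslope ⊢
      have h4 : 0 ≤ s * t - θ := by linarith
      calc 2 * C * (s * t - θ) = (s * t - θ) * (2 * C) := by ring
        _ ≤ (s * t - θ) * (r * s ^ (r - 2) * (s + t) ^ (2 - r)) :=
            mul_le_mul_of_nonneg_left hslope h4
        _ = r * s ^ (r - 2) * (s * t - θ) * (s + t) ^ (2 - r) := by ring
    rw [ge_iff_le, hinner, hnorm]
    have hsplit : C * (s ^ 2 - 2 * θ + t ^ 2) / (s + t) ^ (2 - r)
        = C * (t - s) ^ 2 / (s + t) ^ (2 - r) + 2 * C * (s * t - θ) / (s + t) ^ (2 - r) := by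
      rw [← add_div]
      congr 1
      ring
    rw [hsplit]
    have hLHS : t ^ r - s ^ r - r * s ^ (r - 2) * (θ - s ^ 2)
        = (t ^ r - s ^ r - r * s ^ (r - 1) * (t - s)) + r * s ^ (r - 2) * (s * t - θ) := by
      rw [hsr1]; ring
    rw [hLHS]
    exact add_le_add hkey hslack
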